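/- Let X : [0,1] → ℝ be a 1-dimensional continuously differentiable path and Y : [0,1] → ℝ^n a path. Viewing X ⊠ Y as a membrane into ℝ^n via (s,t) ↦ X(s)·Y(t), the k-th level id-signature satisfies σ^{(k)}(X ⊠ Y) = ((X(1) − X(0))^k / k!) · σ^{(k)}(Y), where σ^{(k)}(Y) is the k-th level path signature of Y. -/

import Mathlib

open MeasureTheory

noncomputable section

/-- The ordered simplex `0 ≤ t 0 ≤ t 1 ≤ ⋯ ≤ t (k-1) ≤ 1` in `Fin k → ℝ`. -/
def orderedSimplex (k : ℕ) : Set (Fin k → ℝ) :=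
  {t | Monotone t ∧ ∀ a, t a ∈ Set.Icc (0 : ℝ) 1}

/-- Iterated-integral (path) signature entry for a family of scalar coordinate
functions `f a : ℝ → ℝ`, i.e. `⟨σ(X), e_{i₁}* ⊗ ⋯ ⊗ e_{i_k}*⟩` with `f a = X_{i_a}`. -/
def pathSig {k : ℕ} (f : Fin k → ℝ → ℝ) : ℝ :=
  ∫ t in orderedSimplex k, ∏ a, deriv (f a) (t a)

/-- Mixed second partial derivative `∂²/∂s∂t`. -/
def d12 (f : ℝ → ℝ → ℝ) (s t : ℝ) : ℝ :=
  deriv (fun t' => deriv (fun s' => f s' t') s) t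

/-- id-signature entry for a family of scalar membrane coordinate functions. -/
def memSig {k : ℕ} (f : Fin k → ℝ → ℝ → ℝ) : ℝ :=
  ∫ p in (orderedSimplex k) ×ˢ (orderedSimplex k), ∏ a, d12 (f a) (p.1 a) (p.2 a)

lemma isClosed_orderedSimplex (k : ℕ) : IsClosed (orderedSimplex k) := by
  have h1 : orderedSimplex k =
      (⋂ (a : Fin k) (b : Fin k) (_ : a ≤ b), {t : Fin k → ℝ | t a ≤ t b}) ∩
        ⋂ a : Fin k, (fun t : Fin k → ℝ => t a) ⁻¹' Set.Icc (0 : ℝ) 1 := by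
    ext t
    simp only [orderedSimplex, Set.mem_setOf_eq, Set.mem_inter_iff, Set.mem_iInter,
      Set.mem_preimage]
    exact ⟨fun ⟨h, h'⟩ => ⟨fun a b hab => h hab, h'⟩, fun ⟨h, h'⟩ => ⟨fun a b hab => h a b hab, h'⟩⟩
  rw [h1]
  refine IsClosed.inter ?_ (isClosed_iInter fun a => isClosed_Icc.preimage (continuous_apply a))
  exact isClosed_iInter fun a => isClosed_iInter fun b => isClosed_iInter fun _ =>
    isClosed_le (continuous_apply a) (continuous_apply b)

/-- The key combinatorial-analytic lemma: the integral of a product of a single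
continuous function over the ordered simplex is `(∫ h)^k / k!`. -/
lemma simplex_integral_pow (k : ℕ) {h : ℝ → ℝ} (hc : Continuous h) :
    ∫ t in orderedSimplex k, ∏ a, h (t a)
      = (∫ x in Set.Icc (0 : ℝ) 1, h x) ^ k / (Nat.factorial k : ℝ) := by
  classical
  set F : (Fin k → ℝ) → ℝ := fun t => ∏ a, h (t a) with hF
  have hFc : Continuous F := continuous_finset_prod _ fun a _ => hc.comp (continuous_apply a)
  set C : Set (Fin k → ℝ) := Set.univ.pi fun _ => Set.Icc (0 : ℝ) 1 with hCdef
  have hCmeas : MeasurableSet C := MeasurableSet.univ_pi fun _ => measurableSet_Icc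
  have hCcomp : IsCompact C := isCompact_univ_pi fun _ => isCompact_Icc
  set s : Equiv.Perm (Fin k) → Set (Fin k → ℝ) :=
    fun σ => (fun t => t ∘ σ) ⁻¹' orderedSimplex k with hs
  have hsub : ∀ σ, s σ ⊆ C := by
    intro σ t ht
    intro a _
    have := ht.2 (σ.symm a)
    simpa using this
  have hclosed : ∀ σ, IsClosed (s σ) :=
    fun σ => (isClosed_orderedSimplex k).preimage
      (continuous_pi fun a => continuous_apply (σ a))
  have hcover : ⋃ σ, s σ = C := by
    refine Set.Subset.antisymm (Set.iUnion_subset hsub) ?_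
    intro t ht
    refine Set.mem_iUnion.2 ⟨Tuple.sort t, ?_, fun a => ?_⟩
    · exact Tuple.monotone_sort t
    · exact ht (Tuple.sort t a) (Set.mem_univ _)
  have hN : volume {t : Fin k → ℝ | ∃ a b : Fin k, a ≠ b ∧ t a = t b} = 0 := by
    have hsubN : {t : Fin k → ℝ | ∃ a b, a ≠ b ∧ t a = t b}
        ⊆ ⋃ (a : Fin k) (b : Fin k) (_ : a ≠ b), {t : Fin k → ℝ | t a = t b} := by
      rintro t ⟨a, b, hab, he⟩
      exact Set.mem_iUnion.2 ⟨a, Set.mem_iUnion.2 ⟨b, Set.mem_iUnion.2 ⟨hab, he⟩⟩⟩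
    refine measure_mono_null hsubN
      (measure_iUnion_null fun a => measure_iUnion_null fun b => measure_iUnion_null fun hab => ?_)
    have heq : {t : Fin k → ℝ | t a = t b}
        = (LinearMap.ker ((LinearMap.proj a : (Fin k → ℝ) →ₗ[ℝ] ℝ) - LinearMap.proj b) : Set _) := by
      ext t
      simp [LinearMap.mem_ker, sub_eq_zero]
    rw [heq]
    refine Measure.addHaar_submodule _ _ ?_
    intro htop
    have hmem : (Pi.single a 1 : Fin k → ℝ) ∈
        LinearMap.ker ((LinearMap.proj a : (Fin k → ℝ) →ₗ[ℝ] ℝ) - LinearMap.proj b) := by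
      rw [htop]; trivial
    simp [LinearMap.mem_ker, Pi.single_eq_same, Pi.single_eq_of_ne (Ne.symm hab)] at hmem
  have hdis : Pairwise (Function.onFun (AEDisjoint volume) s) := by
    intro σ τ hne
    refine measure_mono_null ?_ hN
    rintro t ⟨h1, h2⟩
    simp only [Set.mem_setOf_eq]
    by_contra hcon
    push_neg at hcon
    have hinj : Function.Injective t := by
      intro a b he
      by_contra hab
      exact hcon a b hab he
    have hmono := Tuple.unique_monotone h1.1 h2.1
    exact hne (Equiv.ext fun a => hinj (congrFun hmono a))
  have hint : IntegrableOn F C := hFc.continuousOn.integrableOn_compact hCcomp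
  have hcube : ∫ t in C, F t = (∫ x in Set.Icc (0 : ℝ) 1, h x) ^ k := by
    have e1 : ∫ t in C, F t = ∫ t : Fin k → ℝ, ∏ a, (Set.Icc (0 : ℝ) 1).indicator h (t a) := by
      rw [← integral_indicator hCmeas]
      congr 1
      funext t
      by_cases ht : t ∈ C
      · rw [Set.indicator_of_mem ht]
        exact Finset.prod_congr rfl fun a _ =>
          (Set.indicator_of_mem (ht a (Set.mem_univ a)) h).symm
      · rw [Set.indicator_of_notMem ht]
        rw [Set.mem_univ_pi] at ht
        push_neg at ht
        obtain ⟨a, ha⟩ := ht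
        symm
        exact Finset.prod_eq_zero (Finset.mem_univ a) (Set.indicator_of_notMem ha h)
    rw [e1, MeasureTheory.volume_pi, MeasureTheory.integral_fintype_prod_eq_pow (ι := Fin k) ((Set.Icc (0 : ℝ) 1).indicator h),
      integral_indicator measurableSet_Icc, Fintype.card_fin]
  have hpiece : ∀ σ : Equiv.Perm (Fin k),
      ∫ t in s σ, F t = ∫ t in orderedSimplex k, F t := by
    intro σ
    set T := MeasurableEquiv.piCongrLeft (fun _ : Fin k => ℝ) σ.symm with hT
    have hmp : MeasurePreserving T volume volume :=
      volume_measurePreserving_piCongrLeft _ _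
    have hcoe : ∀ g : Fin k → ℝ, T g = g ∘ σ := by
      intro g
      funext a
      have := Equiv.piCongrLeft_apply_apply (fun _ : Fin k => ℝ) σ.symm g (σ a)
      simpa [hT, MeasurableEquiv.coe_piCongrLeft] using this
    have hpre : s σ = T ⁻¹' orderedSimplex k := by
      ext t
      simp [hs, hcoe]
    have hFsym : ∀ t : Fin k → ℝ, F (T t) = F t := by
      intro t
      rw [hcoe]
      exact Equiv.prod_comp σ fun a => h (t a)
    calc ∫ t in s σ, F t = ∫ t in T ⁻¹' orderedSimplex k, F (T t) := by
          rw [hpre]; exact integral_congr_ae (Filter.Eventually.of_forall fun t => (hFsym t).symm)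
      _ = ∫ t in orderedSimplex k, F t :=
          hmp.setIntegral_preimage_emb T.measurableEmbedding F _
  have key : ∫ t in C, F t = (Nat.factorial k : ℝ) * ∫ t in orderedSimplex k, F t := by
    rw [← hcover, integral_iUnion_ae (fun σ => (hclosed σ).measurableSet.nullMeasurableSet)
      hdis (hcover ▸ hint)]
    rw [tsum_fintype]
    simp only [hpiece]
    rw [Finset.sum_const, Finset.card_univ]
    simp [Fintype.card_perm, Fintype.card_fin, nsmul_eq_mul]
  have hfac : (Nat.factorial k : ℝ) ≠ 0 := Nat.cast_ne_zero.mpr (Nat.factorial_ne_zero k)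
  rw [hcube] at key
  field_simp
  linarith [key]

/-- for a 1-dimensional path `X` and a path `Y` in `ℝⁿ`, the membrane
`(s,t) ↦ X(s)·Y(t)` has `k`-th level id-signature
`((X(1) − X(0))^k / k!) · σ^{(k)}(Y)`. -/
theorem scaling_path_membrane_signature (n k : ℕ)
    (X : ℝ → ℝ) (Y : ℝ → Fin n → ℝ)
    (hX : ContDiff ℝ 1 X) (hY : ContDiff ℝ 1 Y)
    (i : Fin k → Fin n) :
    memSig (fun a s t => X s * Y t (i a))
      = ((X 1 - X 0) ^ k / (Nat.factorial k : ℝ)) * pathSig (fun a t => Y t (i a)) := by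
  have hXd : Differentiable ℝ X := hX.differentiable one_ne_zero
  have hYd : ∀ j, Differentiable ℝ fun u => Y u j :=
    fun j => differentiable_pi.mp (hY.differentiable one_ne_zero) j
  have hd : ∀ (j : Fin n) (s t : ℝ),
      d12 (fun s t => X s * Y t j) s t = deriv X s * deriv (fun u => Y u j) t := by
    intro j s t
    unfold d12
    have h1 : (fun t' : ℝ => deriv (fun s' => X s' * Y t' j) s)
        = fun t' => deriv X s * Y t' j := by
      funext t'
      exact deriv_mul_const (hXd s) (Y t' j)
    rw [h1, deriv_const_mul _ (hYd j t)]
  unfold memSig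
  simp only [hd, Finset.prod_mul_distrib]
  rw [MeasureTheory.Measure.volume_eq_prod, MeasureTheory.setIntegral_prod_mul
    (fun u : Fin k → ℝ => ∏ x, deriv X (u x))
    (fun v : Fin k → ℝ => ∏ x, deriv (fun u => Y u (i x)) (v x))]
  have hIcc : ∫ x in Set.Icc (0 : ℝ) 1, deriv X x = X 1 - X 0 := by
    rw [MeasureTheory.integral_Icc_eq_integral_Ioc,
      ← intervalIntegral.integral_of_le (zero_le_one)]
    exact intervalIntegral.integral_deriv_eq_sub (fun x _ => hXd x)
      ((hX.continuous_deriv le_rfl).intervalIntegrable 0 1)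
  rw [simplex_integral_pow k (hX.continuous_deriv le_rfl), hIcc]
  rfl
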